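/- Suppose all consumers share a common valuation v that is differentiable, strictly concave and non-decreasing, and that p is differentiable and non-decreasing on (0,∞) with p' positive and non-decreasing on (0,∞). For N ≥ 1, let ξ̄_N > 0 satisfy the symmetric Nash-equilibrium condition v'(ξ̄_N) = p(N·ξ̄_N) + ξ̄_N·p'(N·ξ̄_N), and let ξ̄_{N+1} > 0 satisfy v'(ξ̄_{N+1}) = p((N+1)·ξ̄_{N+1}) + ξ̄_{N+1}·p'((N+1)·ξ̄_{N+1}). Then the total demand strictly increases with the number of consumers: N·ξ̄_N < (N+1)·ξ̄_{N+1}. -/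
import Mathlib


open Finset Set

/-- With a common strictly concave valuation and a
differentiable, non-decreasing price with positive, non-decreasing derivative,
the symmetric Nash-equilibrium total demand strictly increases with the number
of consumers: `N·ξ̄_N < (N+1)·ξ̄_{N+1}`. -/
theorem statement_13
    (v v' : ℝ → ℝ) (C p p' : ℝ → ℝ)
    (hv_deriv : ∀ x, HasDerivAt v (v' x) x)
    (hv_sconcave : StrictConcaveOn ℝ (Ici (0 : ℝ)) v)
    (hv_mono : MonotoneOn v (Ici (0 : ℝ)))
    (hv0 : v 0 = 0)
    (hC_diff : DifferentiableOn ℝ C (Ici (0 : ℝ)))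
    (hC_sconvex : StrictConvexOn ℝ (Ici (0 : ℝ)) C)
    (hC0 : C 0 = 0)
    (hCpos : ∀ g : ℝ, 0 < g → 0 < C g)
    (hp : ∀ g : ℝ, 0 < g → p g = C g / g)
    (hp_deriv : ∀ g : ℝ, 0 < g → HasDerivAt p (p' g) g)
    (hp_mono : MonotoneOn p (Ioi (0 : ℝ)))
    (hp'_pos : ∀ g : ℝ, 0 < g → 0 < p' g)
    (hp'_mono : MonotoneOn p' (Ioi (0 : ℝ)))
    (N : ℕ) (hN : 1 ≤ N)
    (a b : ℝ) (ha : 0 < a) (hb : 0 < b)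
    (hfoc_a : v' a = p ((N : ℝ) * a) + a * p' ((N : ℝ) * a))
    (hfoc_b : v' b = p (((N : ℝ) + 1) * b) + b * p' (((N : ℝ) + 1) * b)) :
    (N : ℝ) * a < ((N : ℝ) + 1) * b := by
  by_contra hcon
  push_neg at hcon
  have hNpos : (0:ℝ) < (N:ℝ) := by exact_mod_cast Nat.lt_of_lt_of_le Nat.zero_lt_one hN
  have hNa : 0 < (N:ℝ) * a := mul_pos hNpos ha
  have hNb : 0 < ((N:ℝ) + 1) * b := mul_pos (by linarith) hb
  have hba : b < a := by
    nlinarith [mul_pos hNpos hb]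
  -- strict antitonicity of v' on Ici 0
  have hlt : v' a < v' b := by
    have h1 : v' a < slope v b a :=
      hv_sconcave.lt_slope_of_hasDerivAt (mem_Ici.2 hb.le) (mem_Ici.2 ha.le) hba (hv_deriv a)
    have h2 : slope v b a < v' b :=
      hv_sconcave.slope_lt_of_hasDerivAt (mem_Ici.2 hb.le) (mem_Ici.2 ha.le) hba (hv_deriv b)
    linarith
  have hpm : p (((N:ℝ)+1) * b) ≤ p ((N:ℝ) * a) :=
    hp_mono (mem_Ioi.2 hNb) (mem_Ioi.2 hNa) hcon
  have hp'm : p' (((N:ℝ)+1) * b) ≤ p' ((N:ℝ) * a) :=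
    hp'_mono (mem_Ioi.2 hNb) (mem_Ioi.2 hNa) hcon
  have hterm : b * p' (((N:ℝ)+1) * b) ≤ a * p' ((N:ℝ) * a) := by
    have h0 : 0 < p' (((N:ℝ)+1) * b) := hp'_pos _ hNb
    nlinarith
  rw [hfoc_a, hfoc_b] at hlt
  linarith
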